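/- Let W_sp ∈ ℝ^{n₁×n₁} be the diagonal matrix with entries (W_sp)_{ii} = max(‖X^{(k)}_{i,:}‖₂²/δ², 1)^{−1} for a matrix X^{(k)} ∈ ℝ^{n₁×n₂} and δ > 0. Let X_⋆ ∈ ℝ^{n₁×n₂} have exactly s nonzero rows, and suppose max_{i} ‖X^{(k)}_{i,:} − (X_⋆)_{i,:}‖₂ ≤ ζ·ρ_s(X_⋆) for some 0 < ζ < 1/2, where ρ_s(X_⋆) is the s-th largest row ℓ₂-norm of X_⋆. Assume additionally δ ≤ ρ_{s+1}(X^{(k)}), i.e. all s rows of X^{(k)} supported on the support of X_⋆ have ℓ₂-norm at least δ. Then the row-sum norm satisfies ‖W_sp · X_⋆‖_{1,2} := Σ_i ‖(W_sp · X_⋆)_{i,:}‖₂ ≤ s·δ² / ((1−ζ)²·ρ_s(X_⋆)). -/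

import Mathlib

/-- The ℓ₂-norm of the i-th row of a matrix. -/
noncomputable def rowNorm {n₁ n₂ : ℕ} (X : Matrix (Fin n₁) (Fin n₂) ℝ) (i : Fin n₁) : ℝ :=
  Real.sqrt (∑ j, (X i j) ^ 2)

lemma rowNorm_nonneg {n₁ n₂ : ℕ} (X : Matrix (Fin n₁) (Fin n₂) ℝ) (i : Fin n₁) :
    0 ≤ rowNorm X i := Real.sqrt_nonneg _

lemma rowNorm_smul {n₁ n₂ : ℕ} (X : Matrix (Fin n₁) (Fin n₂) ℝ) (c : Fin n₁ → ℝ) (i : Fin n₁) :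
    rowNorm (Matrix.of fun i' j' => c i' * X i' j') i = |c i| * rowNorm X i := by
  simp only [rowNorm, Matrix.of_apply, mul_pow, ← Finset.mul_sum]
  rw [Real.sqrt_mul (sq_nonneg _), Real.sqrt_sq_eq_abs]

lemma rowNorm_triangle {n₁ n₂ : ℕ} (A B : Matrix (Fin n₁) (Fin n₂) ℝ) (i : Fin n₁) :
    rowNorm B i ≤ rowNorm A i + rowNorm (A - B) i := by
  have h : ∀ (X : Matrix (Fin n₁) (Fin n₂) ℝ),
      rowNorm X i = ‖(WithLp.equiv 2 (Fin n₂ → ℝ)).symm (X i)‖ := by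
    intro X
    rw [EuclideanSpace.norm_eq]
    simp [rowNorm, sq_abs]
  rw [h, h, h]
  have : (WithLp.equiv 2 (Fin n₂ → ℝ)).symm (B i) =
      (WithLp.equiv 2 (Fin n₂ → ℝ)).symm (A i) -
      (WithLp.equiv 2 (Fin n₂ → ℝ)).symm ((A - B) i) := by
    ext j
    simp [Matrix.sub_apply]
  rw [this]
  exact norm_sub_le _ _

/-- bound on the row-sum norm `‖W_sp · X_⋆‖_{1,2}` of the sparsity-weighted ground
truth, where `W_sp = diag(max(‖X^{(k)}_{i,:}‖₂²/δ², 1)⁻¹)`, `X_⋆` has exactly `s` nonzero rows with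
row support `S`, `ρ` is the `s`-th largest row ℓ₂-norm of `X_⋆`, `‖X^{(k)} − X_⋆‖_{∞,2} ≤ ζ·ρ`
with `0 < ζ < 1/2`, and all rows of `X^{(k)}` supported on `S` have ℓ₂-norm at least `δ`. -/
theorem sparsity_weight_row_sum_bound {n₁ n₂ s : ℕ}
    (Xk Xstar : Matrix (Fin n₁) (Fin n₂) ℝ) (δ ζ ρ : ℝ)
    (hδ : 0 < δ) (hζ₁ : 0 < ζ) (hζ₂ : ζ < 1 / 2)
    (S : Finset (Fin n₁)) (hS : ∀ i, i ∈ S ↔ ∃ j, Xstar i j ≠ 0) (hcard : S.card = s)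
    (hρ₁ : ∀ i ∈ S, ρ ≤ rowNorm Xstar i) (hρ₂ : ∃ i ∈ S, rowNorm Xstar i = ρ)
    (hclose : ∀ i, rowNorm (Xk - Xstar) i ≤ ζ * ρ)
    (hdelta : ∀ i ∈ S, δ ≤ rowNorm Xk i) :
    ∑ i, rowNorm (Matrix.of fun i' j' => (max ((rowNorm Xk i') ^ 2 / δ ^ 2) 1)⁻¹ * Xstar i' j') i
      ≤ s * δ ^ 2 / ((1 - ζ) ^ 2 * ρ) := by
  have hζ' : 0 < 1 - ζ := by linarith
  -- ρ > 0
  obtain ⟨i0, hi0S, hi0⟩ := hρ₂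
  have hρ0 : 0 < ρ := by
    rcases (hS i0).1 hi0S with ⟨j, hj⟩
    rw [← hi0]
    apply Real.sqrt_pos.2
    exact Finset.sum_pos' (fun j _ => sq_nonneg _) ⟨j, Finset.mem_univ j, by positivity⟩
  -- reduce sum to S
  rw [← Finset.sum_subset (Finset.subset_univ S) (by
    intro i _ hiS
    have hz : ∀ j, Xstar i j = 0 := by
      intro j; by_contra h; exact hiS ((hS i).2 ⟨j, h⟩)
    simp [rowNorm, hz])]
  have key : ∀ i ∈ S, rowNorm (Matrix.of fun i' j' =>
      (max ((rowNorm Xk i') ^ 2 / δ ^ 2) 1)⁻¹ * Xstar i' j') i ≤ δ ^ 2 / ((1 - ζ) ^ 2 * ρ) := by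
    intro i hi
    set r := rowNorm Xk i with hr
    set a := rowNorm Xstar i with ha
    have hra : 0 < a := lt_of_lt_of_le hρ0 (hρ₁ i hi)
    have hrδ : δ ≤ r := hdelta i hi
    have hr0 : 0 < r := lt_of_lt_of_le hδ hrδ
    have hmax : max (r ^ 2 / δ ^ 2) 1 = r ^ 2 / δ ^ 2 := by
      apply max_eq_left
      rw [le_div_iff₀ (by positivity), one_mul]
      exact pow_le_pow_left₀ hδ.le hrδ 2
    rw [rowNorm_smul, hmax]
    have hw : |(r ^ 2 / δ ^ 2)⁻¹| = δ ^ 2 / r ^ 2 := by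
      rw [abs_of_nonneg (by positivity), inv_div]
    rw [hw]
    -- r ≥ (1-ζ)a and r ≥ (1-ζ)ρ
    have htri : a ≤ r + ζ * ρ := le_trans (rowNorm_triangle Xk Xstar i)
      (by exact add_le_add_right (hclose i) r)
    have h1 : (1 - ζ) * a ≤ r := by
      have := hρ₁ i hi
      nlinarith
    have h2 : (1 - ζ) * ρ ≤ r := by
      have := hρ₁ i hi
      nlinarith
    have hr2 : (1 - ζ) ^ 2 * ρ * a ≤ r ^ 2 := by
      nlinarith [mul_le_mul h2 h1 (by positivity : (0:ℝ) ≤ (1 - ζ) * a) hr0.le]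
    rw [div_mul_eq_mul_div, div_le_div_iff₀ (by positivity) (by positivity)]
    nlinarith [sq_nonneg δ]
  calc ∑ i ∈ S, rowNorm (Matrix.of fun i' j' =>
        (max ((rowNorm Xk i') ^ 2 / δ ^ 2) 1)⁻¹ * Xstar i' j') i
      ≤ ∑ _i ∈ S, δ ^ 2 / ((1 - ζ) ^ 2 * ρ) := Finset.sum_le_sum key
    _ = s * δ ^ 2 / ((1 - ζ) ^ 2 * ρ) := by
        rw [Finset.sum_const, hcard]
        push_cast
        ring
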